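/- If σ² < 2π, the equilibrium threshold τ*(γ), defined implicitly by Δ(τ*(γ), γ) = 0, is strictly decreasing in γ on (0,1). -/

import Mathlib

open MeasureTheory ProbabilityTheory Filter
open Set

noncomputable def stdPDF (x : ℝ) : ℝ := (Real.sqrt (2 * Real.pi))⁻¹ * Real.exp (-x ^ 2 / 2)

noncomputable def stdCDF (x : ℝ) : ℝ := ∫ t in Set.Iic x, stdPDF t

/-- Posterior density of Θ given Y = τ: Gaussian with mean ατ, variance ασ², α = 1/(1+σ²). -/
noncomputable def postPDF (σ τ θ : ℝ) : ℝ :=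
  (Real.sqrt ((1 / (1 + σ ^ 2)) * σ ^ 2))⁻¹ *
    stdPDF ((θ - (1 / (1 + σ ^ 2)) * τ) / Real.sqrt ((1 / (1 + σ ^ 2)) * σ ^ 2))

/-- Two-stage indifference function. -/
noncomputable def Δ₂ (σ γ τ : ℝ) : ℝ :=
  (∫ θ in Set.Iic (1 : ℝ), (1 - γ) * (1 - θ) * postPDF σ τ θ) +
    ∫ θ in Set.Ioi (1 : ℝ), (stdCDF ((τ - θ) / σ) - θ) * postPDF σ τ θ

/-- Single-stage indifference function. -/
noncomputable def Δ₁ (σ τ : ℝ) : ℝ :=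
  ∫ θ, (stdCDF ((τ - θ) / σ) - θ) * postPDF σ τ θ

/-- First-stage participation fraction. -/
noncomputable def F1 (σ τ θ : ℝ) : ℝ := stdCDF ((τ - θ) / σ)

/-- Two-stage welfare. -/
noncomputable def W₂ (σ γ τ : ℝ) : ℝ :=
  (∫ θ in Set.Iic (1 : ℝ), (F1 σ τ θ + γ * (1 - F1 σ τ θ)) * (1 - θ) * stdPDF θ) +
    ∫ θ in Set.Ioi (1 : ℝ), F1 σ τ θ * (F1 σ τ θ - θ) * stdPDF θ

/-- Single-stage welfare. -/
noncomputable def W₁ (σ τ : ℝ) : ℝ :=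
  ∫ θ, F1 σ τ θ * (F1 σ τ θ - θ) * stdPDF θ

/-- Marginal density of Y = Θ + Z. -/
noncomputable def fY (σ τ : ℝ) : ℝ :=
  (Real.sqrt (1 + σ ^ 2))⁻¹ * stdPDF (τ / Real.sqrt (1 + σ ^ 2))


lemma stdPDF_pos (x : ℝ) : 0 < stdPDF x := by
  unfold stdPDF
  positivity

lemma stdPDF_nonneg (x : ℝ) : 0 ≤ stdPDF x := (stdPDF_pos x).le

lemma sqrt_two_pi_pos : 0 < Real.sqrt (2 * Real.pi) :=
  Real.sqrt_pos.2 (by positivity)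

lemma stdPDF_le (x : ℝ) : stdPDF x ≤ (Real.sqrt (2 * Real.pi))⁻¹ := by
  unfold stdPDF
  have h1 : Real.exp (-x ^ 2 / 2) ≤ 1 := Real.exp_le_one_iff.2 (by nlinarith [sq_nonneg x])
  have h0 : (0:ℝ) ≤ (Real.sqrt (2 * Real.pi))⁻¹ := inv_nonneg.2 sqrt_two_pi_pos.le
  exact mul_le_of_le_one_right h0 h1

lemma stdPDF_eq (x : ℝ) : stdPDF x = (Real.sqrt (2 * Real.pi))⁻¹ * Real.exp (-(1/2) * x ^ 2) := by
  unfold stdPDF; ring_nf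

lemma integrable_stdPDF : Integrable stdPDF := by
  have : Integrable (fun x : ℝ => Real.exp (-(1/2) * x ^ 2)) :=
    integrable_exp_neg_mul_sq (by norm_num)
  have h2 := this.const_mul (Real.sqrt (2 * Real.pi))⁻¹
  exact h2.congr (Eventually.of_forall fun x => (stdPDF_eq x).symm)

lemma integrable_abs_mul_stdPDF : Integrable (fun x => |x| * stdPDF x) := by
  have h : Integrable (fun x : ℝ => x * Real.exp (-(1/2) * x ^ 2)) :=
    integrable_mul_exp_neg_mul_sq (by norm_num)
  have h2 : Integrable (fun x : ℝ => (Real.sqrt (2 * Real.pi))⁻¹ * (x * Real.exp (-(1/2) * x ^ 2))) :=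
    h.const_mul _
  have := h2.abs
  refine this.congr (Eventually.of_forall fun x => ?_)
  show |(Real.sqrt (2*Real.pi))⁻¹ * (x * Real.exp (-(1/2) * x ^ 2))| = |x| * stdPDF x
  rw [abs_mul, abs_mul, abs_of_nonneg (inv_nonneg.2 sqrt_two_pi_pos.le),
    abs_of_nonneg (Real.exp_nonneg _), stdPDF_eq]; ring

lemma integral_stdPDF : ∫ x, stdPDF x = 1 := by
  simp_rw [stdPDF_eq]
  rw [integral_const_mul, integral_gaussian]
  rw [div_div_eq_mul_div, div_one, mul_comm Real.pi 2] at *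
  · exact inv_mul_cancel₀ sqrt_two_pi_pos.ne'

lemma stdCDF_nonneg (x : ℝ) : 0 ≤ stdCDF x :=
  setIntegral_nonneg measurableSet_Iic fun t _ => stdPDF_nonneg t

lemma one_sub_stdCDF (x : ℝ) : 1 - stdCDF x = ∫ t in Set.Ioi x, stdPDF t := by
  have h := intervalIntegral.integral_Iic_add_Ioi (b := x) integrable_stdPDF.integrableOn
    integrable_stdPDF.integrableOn
  rw [integral_stdPDF] at h
  unfold stdCDF; linarith

lemma stdCDF_lt_one (x : ℝ) : stdCDF x < 1 := by
  have h : 0 < ∫ t in Set.Ioi x, stdPDF t := by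
    rw [setIntegral_pos_iff_support_of_nonneg_ae
      (Eventually.of_forall fun t => stdPDF_nonneg t) integrable_stdPDF.integrableOn]
    have : Function.support stdPDF ∩ Set.Ioi x = Set.Ioi x := by
      rw [Set.inter_eq_right]
      intro t _
      exact (stdPDF_pos t).ne'
    rw [this, Real.volume_Ioi]
    exact ENNReal.zero_lt_top
  have := one_sub_stdCDF x
  linarith

lemma stdCDF_le_one (x : ℝ) : stdCDF x ≤ 1 := (stdCDF_lt_one x).le

lemma stdCDF_mono : Monotone stdCDF := fun a b hab =>
  setIntegral_mono_set integrable_stdPDF.integrableOn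
    (Eventually.of_forall fun t => stdPDF_nonneg t)
    (HasSubset.Subset.eventuallyLE (Set.Iic_subset_Iic.2 hab))

lemma stdCDF_measurable : Measurable stdCDF := stdCDF_mono.measurable

lemma stdCDF_lipschitz {a b : ℝ} (hab : a ≤ b) :
    stdCDF b - stdCDF a ≤ (Real.sqrt (2 * Real.pi))⁻¹ * (b - a) := by
  have h1 : stdCDF b - stdCDF a = ∫ t in Set.Ioc a b, stdPDF t := by
    unfold stdCDF
    rw [← Set.Iic_union_Ioc_eq_Iic hab, setIntegral_union (Set.Iic_disjoint_Ioc le_rfl)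
      measurableSet_Ioc integrable_stdPDF.integrableOn integrable_stdPDF.integrableOn]
    ring
  rw [h1]
  have h2 : ∫ t in Set.Ioc a b, stdPDF t ≤ ∫ _t in Set.Ioc a b, (Real.sqrt (2 * Real.pi))⁻¹ :=
    setIntegral_mono_on integrable_stdPDF.integrableOn (integrableOn_const (by
      rw [Real.volume_Ioc]; exact ENNReal.ofReal_ne_top)) measurableSet_Ioc
      fun t _ => stdPDF_le t
  calc ∫ t in Set.Ioc a b, stdPDF t ≤ ∫ _t in Set.Ioc a b, (Real.sqrt (2 * Real.pi))⁻¹ := h2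
    _ = (b - a) * (Real.sqrt (2 * Real.pi))⁻¹ := by
        rw [setIntegral_const, measureReal_def, Real.volume_Ioc, smul_eq_mul, ENNReal.toReal_ofReal (by linarith)]
    _ = (Real.sqrt (2 * Real.pi))⁻¹ * (b - a) := mul_comm _ _

lemma integral_comp_affine (H : ℝ → ℝ) {s : ℝ} (hs : 0 < s) (m : ℝ) :
    ∫ x, H (s * x + m) = s⁻¹ * ∫ x, H x := by
  have h1 : (∫ x : ℝ, (fun y => H (y + m)) (s * x)) = |s⁻¹| • ∫ y, H (y + m) :=
    MeasureTheory.Measure.integral_comp_mul_left (fun y => H (y + m)) s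
  have h2 : (∫ y : ℝ, H (y + m)) = ∫ y, H y := integral_add_right_eq_self H m
  simp only [smul_eq_mul, abs_of_pos (inv_pos.2 hs), h2] at h1
  exact h1

lemma mem_iff_affine_Iic {s : ℝ} (hs : 0 < s) (m c x : ℝ) :
    x ≤ (c - m) / s ↔ s * x + m ≤ c := by
  rw [le_div_iff₀ hs]
  constructor <;> intro h <;> nlinarith

lemma setIntegral_Iic_affine (F : ℝ → ℝ) {s : ℝ} (hs : 0 < s) (m c : ℝ) :
    ∫ x in Set.Iic ((c - m) / s), F (s * x + m) = s⁻¹ * ∫ θ in Set.Iic c, F θ := by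
  rw [← integral_indicator measurableSet_Iic, ← integral_indicator measurableSet_Iic,
    ← integral_comp_affine (Set.indicator (Set.Iic c) F) hs m]
  congr 1; funext x
  rw [Set.indicator_apply, Set.indicator_apply]
  exact if_congr (by simpa only [Set.mem_Iic] using mem_iff_affine_Iic hs m c x) rfl rfl

lemma setIntegral_Ioi_affine (F : ℝ → ℝ) {s : ℝ} (hs : 0 < s) (m c : ℝ) :
    ∫ x in Set.Ioi ((c - m) / s), F (s * x + m) = s⁻¹ * ∫ θ in Set.Ioi c, F θ := by
  rw [← integral_indicator measurableSet_Ioi, ← integral_indicator measurableSet_Ioi,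
    ← integral_comp_affine (Set.indicator (Set.Ioi c) F) hs m]
  congr 1; funext x
  rw [Set.indicator_apply, Set.indicator_apply]
  refine if_congr ?_ rfl rfl
  simp only [Set.mem_Ioi]
  constructor
  · intro h
    have := (div_lt_iff₀ hs).1 h
    nlinarith
  · intro h
    rw [div_lt_iff₀ hs]
    nlinarith

noncomputable def sP (σ : ℝ) : ℝ := Real.sqrt ((1 / (1 + σ ^ 2)) * σ ^ 2)
noncomputable def mP (σ τ : ℝ) : ℝ := (1 / (1 + σ ^ 2)) * τ
noncomputable def uP (σ τ : ℝ) : ℝ := (1 - mP σ τ) / sP σ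

noncomputable def gfun (σ γ τ x : ℝ) : ℝ :=
  if sP σ * x + mP σ τ ≤ 1 then (1 - γ) * (1 - (sP σ * x + mP σ τ))
  else stdCDF ((τ - (sP σ * x + mP σ τ)) / σ) - (sP σ * x + mP σ τ)

lemma sP_pos {σ : ℝ} (hσ : 0 < σ) : 0 < sP σ := by
  apply Real.sqrt_pos.2
  have h1 : (0:ℝ) < 1 + σ ^ 2 := by positivity
  positivity

lemma postPDF_eq (σ τ θ : ℝ) :
    postPDF σ τ θ = (sP σ)⁻¹ * stdPDF ((θ - mP σ τ) / sP σ) := rfl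

lemma gfun_measurable (σ γ τ : ℝ) : Measurable (gfun σ γ τ) := by
  unfold gfun
  refine Measurable.ite (measurableSet_le (by fun_prop) measurable_const) (by fun_prop) ?_
  refine Measurable.sub ?_ (by fun_prop)
  exact stdCDF_measurable.comp (by fun_prop)

lemma stdPDF_measurable : Measurable stdPDF := by
  unfold stdPDF; fun_prop

lemma gfun_abs_le {σ γ : ℝ} (hγ0 : 0 ≤ γ) (hγ1 : γ ≤ 1) (τ x : ℝ) :
    |gfun σ γ τ x| ≤ (1 + |mP σ τ| + |sP σ| * |x|) := by
  have hθ : |sP σ * x + mP σ τ| ≤ |sP σ| * |x| + |mP σ τ| := by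
    calc |sP σ * x + mP σ τ| ≤ |sP σ * x| + |mP σ τ| := abs_add_le _ _
      _ = |sP σ| * |x| + |mP σ τ| := by rw [abs_mul]
  unfold gfun
  split
  · rw [abs_mul]
    have h1 : |1 - γ| ≤ 1 := by rw [abs_le]; constructor <;> linarith
    have h2 : |1 - (sP σ * x + mP σ τ)| ≤ 1 + |sP σ * x + mP σ τ| := by
      calc |1 - (sP σ * x + mP σ τ)| ≤ |(1:ℝ)| + |sP σ * x + mP σ τ| := abs_sub _ _
        _ = 1 + |sP σ * x + mP σ τ| := by rw [abs_one]
    have h3 : |1 - (sP σ * x + mP σ τ)| ≥ 0 := abs_nonneg _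
    nlinarith
  · have hc1 : |stdCDF ((τ - (sP σ * x + mP σ τ)) / σ)| ≤ 1 := by
      rw [abs_le]
      exact ⟨by linarith [stdCDF_nonneg ((τ - (sP σ * x + mP σ τ)) / σ)],
        stdCDF_le_one _⟩
    calc |stdCDF ((τ - (sP σ * x + mP σ τ)) / σ) - (sP σ * x + mP σ τ)|
        ≤ |stdCDF ((τ - (sP σ * x + mP σ τ)) / σ)| + |sP σ * x + mP σ τ| := abs_sub _ _
      _ ≤ 1 + (|sP σ| * |x| + |mP σ τ|) := add_le_add hc1 hθ
      _ = 1 + |mP σ τ| + |sP σ| * |x| := by ring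

lemma gfun_integrable {σ γ : ℝ} (hγ0 : 0 ≤ γ) (hγ1 : γ ≤ 1) (τ : ℝ) :
    Integrable (fun x => gfun σ γ τ x * stdPDF x) := by
  have hb0 : Integrable (fun x : ℝ =>
      (1 + |mP σ τ|) * stdPDF x + |sP σ| * (|x| * stdPDF x)) :=
    (integrable_stdPDF.const_mul _).add (integrable_abs_mul_stdPDF.const_mul _)
  have hb : Integrable (fun x : ℝ => (1 + |mP σ τ| + |sP σ| * |x|) * stdPDF x) := by
    refine hb0.congr (Eventually.of_forall fun x => ?_)
    ring
  refine Integrable.mono' hb ?_ (Eventually.of_forall fun x => ?_)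
  · exact ((gfun_measurable σ γ τ).mul stdPDF_measurable).aestronglyMeasurable
  · rw [Real.norm_eq_abs, abs_mul, abs_of_nonneg (stdPDF_nonneg x)]
    exact mul_le_mul_of_nonneg_right (gfun_abs_le hγ0 hγ1 τ x) (stdPDF_nonneg x)

lemma Δ₂_rep {σ γ : ℝ} (hσ : 0 < σ) (hγ0 : 0 ≤ γ) (hγ1 : γ ≤ 1) (τ : ℝ) :
    Δ₂ σ γ τ = ∫ x, gfun σ γ τ x * stdPDF x := by
  have hs := sP_pos hσ
  set s := sP σ with hs_def
  set m := mP σ τ with hm_def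
  have hxback : ∀ x : ℝ, (s * x + m - m) / s = x := by
    intro x; field_simp; ring
  -- first integral
  have e1 : (∫ θ in Set.Iic (1:ℝ), (1 - γ) * (1 - θ) * postPDF σ τ θ)
      = ∫ x in Set.Iic (uP σ τ), (1 - γ) * (1 - (s * x + m)) * stdPDF x := by
    have c1 : (∫ θ in Set.Iic (1:ℝ), (1 - γ) * (1 - θ) * postPDF σ τ θ)
        = s⁻¹ * ∫ θ in Set.Iic (1:ℝ), (1 - γ) * (1 - θ) * stdPDF ((θ - m) / s) := by
      rw [← integral_const_mul]
      refine setIntegral_congr_fun measurableSet_Iic fun θ _ => ?_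
      rw [postPDF_eq]; ring
    rw [c1, ← setIntegral_Iic_affine (fun θ => (1 - γ) * (1 - θ) * stdPDF ((θ - m) / s)) hs m 1]
    have : uP σ τ = (1 - m) / s := rfl
    rw [this]
    refine setIntegral_congr_fun measurableSet_Iic fun x _ => ?_
    rw [hxback x]
  -- second integral
  have e2 : (∫ θ in Set.Ioi (1:ℝ), (stdCDF ((τ - θ) / σ) - θ) * postPDF σ τ θ)
      = ∫ x in Set.Ioi (uP σ τ), (stdCDF ((τ - (s * x + m)) / σ) - (s * x + m)) * stdPDF x := by
    have c1 : (∫ θ in Set.Ioi (1:ℝ), (stdCDF ((τ - θ) / σ) - θ) * postPDF σ τ θ)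
        = s⁻¹ * ∫ θ in Set.Ioi (1:ℝ), (stdCDF ((τ - θ) / σ) - θ) * stdPDF ((θ - m) / s) := by
      rw [← integral_const_mul]
      refine setIntegral_congr_fun measurableSet_Ioi fun θ _ => ?_
      rw [postPDF_eq]; ring
    rw [c1, ← setIntegral_Ioi_affine
      (fun θ => (stdCDF ((τ - θ) / σ) - θ) * stdPDF ((θ - m) / s)) hs m 1]
    have : uP σ τ = (1 - m) / s := rfl
    rw [this]
    refine setIntegral_congr_fun measurableSet_Ioi fun x _ => ?_
    rw [hxback x]
  have g1 : (∫ x in Set.Iic (uP σ τ), (1 - γ) * (1 - (s * x + m)) * stdPDF x)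
      = ∫ x in Set.Iic (uP σ τ), gfun σ γ τ x * stdPDF x := by
    refine setIntegral_congr_fun measurableSet_Iic fun x hx => ?_
    have hcond : s * x + m ≤ 1 := (mem_iff_affine_Iic hs m 1 x).1 hx
    unfold gfun
    rw [if_pos hcond]
  have g2 : (∫ x in Set.Ioi (uP σ τ), (stdCDF ((τ - (s * x + m)) / σ) - (s * x + m)) * stdPDF x)
      = ∫ x in Set.Ioi (uP σ τ), gfun σ γ τ x * stdPDF x := by
    refine setIntegral_congr_fun measurableSet_Ioi fun x hx => ?_
    have hx' : (1 - m) / s < x := hx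
    have hcond : ¬ (s * x + m ≤ 1) := by
      intro hc
      exact absurd ((mem_iff_affine_Iic hs m 1 x).2 hc) (not_le.2 hx')
    unfold gfun
    rw [if_neg hcond]
  unfold Δ₂
  rw [e1, e2, g1, g2]
  exact intervalIntegral.integral_Iic_add_Ioi
    (gfun_integrable hγ0 hγ1 τ).integrableOn (gfun_integrable hγ0 hγ1 τ).integrableOn

lemma sigma_lt_sqrt {σ : ℝ} (hσ : 0 < σ) (hσ' : σ ^ 2 < 2 * Real.pi) :
    σ < Real.sqrt (2 * Real.pi) := by
  rw [show σ = Real.sqrt (σ ^ 2) by rw [Real.sqrt_sq hσ.le]]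
  exact Real.sqrt_lt_sqrt (by positivity) hσ'

lemma gfun_anti_tau {σ γ : ℝ} (hσ : 0 < σ) (hσ' : σ ^ 2 < 2 * Real.pi)
    (hγ0 : 0 ≤ γ) (hγ1 : γ < 1) {τ₁ τ₂ : ℝ} (h : τ₁ < τ₂) (x : ℝ) :
    gfun σ γ τ₂ x < gfun σ γ τ₁ x := by
  have hs := sP_pos hσ
  have hden : (0:ℝ) < 1 + σ ^ 2 := by positivity
  have hα : (0:ℝ) < 1 / (1 + σ ^ 2) := by positivity
  have hα1 : 1 / (1 + σ ^ 2) ≤ 1 := by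
    rw [div_le_one hden]; nlinarith
  have hm : mP σ τ₁ < mP σ τ₂ := by
    unfold mP
    exact mul_lt_mul_of_pos_left h hα
  set θ₁ := sP σ * x + mP σ τ₁ with hθ₁
  set θ₂ := sP σ * x + mP σ τ₂ with hθ₂
  have hθ : θ₁ < θ₂ := by rw [hθ₁, hθ₂]; linarith
  have hθdiff : θ₂ - θ₁ = (1 / (1 + σ ^ 2)) * (τ₂ - τ₁) := by
    rw [hθ₁, hθ₂]; unfold mP; ring
  unfold gfun
  split_ifs with h2 h1 h1
  -- h2 : θ₂ ≤ 1 cases; careful: order of ifs in goal: first is τ₂ branch, second τ₁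
  · -- θ₂ ≤ 1, θ₁ ≤ 1
    have : (0:ℝ) < 1 - γ := by linarith
    nlinarith
  · -- θ₂ ≤ 1 but ¬ θ₁ ≤ 1 : impossible
    exact absurd (le_trans hθ.le h2) h1
  · -- ¬ θ₂ ≤ 1, θ₁ ≤ 1
    have hΦ : stdCDF ((τ₂ - θ₂) / σ) < 1 := stdCDF_lt_one _
    have h2' : 1 < θ₂ := not_le.1 h2
    nlinarith
  · -- both > 1
    have h2' : 1 < θ₂ := not_le.1 h2
    set z₁ := (τ₁ - θ₁) / σ with hz₁
    set z₂ := (τ₂ - θ₂) / σ with hz₂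
    have hzdiff : z₂ - z₁ = (σ / (1 + σ ^ 2)) * (τ₂ - τ₁) := by
      rw [hz₁, hz₂, hθ₁, hθ₂]
      unfold mP
      field_simp
      ring
    have hz : z₁ ≤ z₂ := by
      have hd : (0:ℝ) < τ₂ - τ₁ := by linarith
      have : (0:ℝ) ≤ (σ / (1 + σ ^ 2)) * (τ₂ - τ₁) := by positivity
      linarith [hzdiff]
    have hlip := stdCDF_lipschitz hz
    -- need : stdCDF z₂ - θ₂ < stdCDF z₁ - θ₁
    have hkey : (Real.sqrt (2 * Real.pi))⁻¹ * (z₂ - z₁) < θ₂ - θ₁ := by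
      rw [hzdiff, hθdiff]
      have hσlt := sigma_lt_sqrt hσ hσ'
      have hsp := sqrt_two_pi_pos
      rw [div_eq_mul_one_div σ (1 + σ ^ 2)]
      have hfac : (0:ℝ) < (1 / (1 + σ ^ 2)) * (τ₂ - τ₁) := by
        have : (0:ℝ) < τ₂ - τ₁ := by linarith
        positivity
      calc (Real.sqrt (2 * Real.pi))⁻¹ * (σ * (1 / (1 + σ ^ 2)) * (τ₂ - τ₁))
          = ((Real.sqrt (2 * Real.pi))⁻¹ * σ) * ((1 / (1 + σ ^ 2)) * (τ₂ - τ₁)) := by ring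
        _ < 1 * ((1 / (1 + σ ^ 2)) * (τ₂ - τ₁)) := by
            refine mul_lt_mul_of_pos_right ?_ hfac
            rw [inv_mul_lt_iff₀ hsp]
            linarith
        _ = (1 / (1 + σ ^ 2)) * (τ₂ - τ₁) := one_mul _
    linarith

lemma Δ₂_strictAnti_tau {σ γ : ℝ} (hσ : 0 < σ) (hσ' : σ ^ 2 < 2 * Real.pi)
    (hγ0 : 0 ≤ γ) (hγ1 : γ < 1) : StrictAnti (fun τ => Δ₂ σ γ τ) := by
  intro τ₁ τ₂ h
  show Δ₂ σ γ τ₂ < Δ₂ σ γ τ₁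
  rw [Δ₂_rep hσ hγ0 hγ1.le, Δ₂_rep hσ hγ0 hγ1.le]
  have hi₁ := gfun_integrable (σ := σ) hγ0 hγ1.le τ₁
  have hi₂ := gfun_integrable (σ := σ) hγ0 hγ1.le τ₂
  have hsub : (∫ x, gfun σ γ τ₁ x * stdPDF x) - (∫ x, gfun σ γ τ₂ x * stdPDF x)
      = ∫ x, (gfun σ γ τ₁ x - gfun σ γ τ₂ x) * stdPDF x := by
    rw [← integral_sub hi₁ hi₂]
    refine integral_congr_ae (Eventually.of_forall fun x => ?_)
    ring
  have hpos : ∀ x, 0 < (gfun σ γ τ₁ x - gfun σ γ τ₂ x) * stdPDF x := fun x =>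
    mul_pos (sub_pos.2 (gfun_anti_tau hσ hσ' hγ0 hγ1 h x)) (stdPDF_pos x)
  have hint : Integrable (fun x => (gfun σ γ τ₁ x - gfun σ γ τ₂ x) * stdPDF x) := by
    refine (hi₁.sub hi₂).congr (Eventually.of_forall fun x => ?_)
    simp only [Pi.sub_apply]
    ring
  have h0 : 0 < ∫ x, (gfun σ γ τ₁ x - gfun σ γ τ₂ x) * stdPDF x := by
    rw [integral_pos_iff_support_of_nonneg (fun x => (hpos x).le) hint]
    have : Function.support (fun x => (gfun σ γ τ₁ x - gfun σ γ τ₂ x) * stdPDF x) = Set.univ :=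
      Set.eq_univ_of_forall fun x => (hpos x).ne'
    rw [this]
    simp
  linarith [hsub, h0]

lemma Δ₂_anti_gamma {σ γ₁ γ₂ : ℝ} (hσ : 0 < σ) (hγ0 : 0 ≤ γ₁) (h12 : γ₁ < γ₂)
    (hγ1 : γ₂ ≤ 1) (τ : ℝ) : Δ₂ σ γ₂ τ < Δ₂ σ γ₁ τ := by
  rw [Δ₂_rep hσ hγ0 (by linarith), Δ₂_rep hσ (by linarith) hγ1]
  have hi₁ := gfun_integrable (σ := σ) (γ := γ₁) hγ0 (by linarith) τ
  have hi₂ := gfun_integrable (σ := σ) (γ := γ₂) (by linarith) hγ1 τ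
  have hs := sP_pos hσ
  have hdiff : ∀ x, gfun σ γ₁ τ x - gfun σ γ₂ τ x
      = if sP σ * x + mP σ τ ≤ 1 then (γ₂ - γ₁) * (1 - (sP σ * x + mP σ τ)) else 0 := by
    intro x
    unfold gfun
    split <;> ring
  have hnn : ∀ x, 0 ≤ (gfun σ γ₁ τ x - gfun σ γ₂ τ x) * stdPDF x := by
    intro x
    refine mul_nonneg ?_ (stdPDF_nonneg x)
    rw [hdiff x]
    split
    · next hc => nlinarith
    · exact le_refl 0
  have hint : Integrable (fun x => (gfun σ γ₁ τ x - gfun σ γ₂ τ x) * stdPDF x) := by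
    refine (hi₁.sub hi₂).congr (Eventually.of_forall fun x => ?_)
    simp only [Pi.sub_apply]
    ring
  have hposIio : ∀ x ∈ Set.Iio (uP σ τ), 0 < (gfun σ γ₁ τ x - gfun σ γ₂ τ x) * stdPDF x := by
    intro x hx
    have hx' : x < (1 - mP σ τ) / sP σ := hx
    have hθ : sP σ * x + mP σ τ < 1 := by
      have := (lt_div_iff₀ hs).1 hx'
      nlinarith
    refine mul_pos ?_ (stdPDF_pos x)
    rw [hdiff x, if_pos hθ.le]
    nlinarith
  have h0 : 0 < ∫ x, (gfun σ γ₁ τ x - gfun σ γ₂ τ x) * stdPDF x := by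
    rw [integral_pos_iff_support_of_nonneg hnn hint]
    refine lt_of_lt_of_le ?_ (measure_mono (fun x hx => (hposIio x hx).ne'))
    rw [Real.volume_Iio]
    exact ENNReal.zero_lt_top
  have hsub : (∫ x, gfun σ γ₁ τ x * stdPDF x) - (∫ x, gfun σ γ₂ τ x * stdPDF x)
      = ∫ x, (gfun σ γ₁ τ x - gfun σ γ₂ τ x) * stdPDF x := by
    rw [← integral_sub hi₁ hi₂]
    refine integral_congr_ae (Eventually.of_forall fun x => ?_)
    ring
  linarith [hsub, h0]


/-- If σ² < 2π, the equilibrium threshold τ*(γ), defined by Δ(τ*(γ),γ) = 0, is strictly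
decreasing in γ on (0,1). -/
theorem stmt9 (σ : ℝ) (hσ : 0 < σ) (hσ' : σ ^ 2 < 2 * Real.pi)
    (τstar : ℝ → ℝ) (hroot : ∀ γ ∈ Set.Ioo (0 : ℝ) 1, Δ₂ σ γ (τstar γ) = 0) :
    StrictAntiOn τstar (Set.Ioo (0 : ℝ) 1) := by
  intro γ₁ hγ₁ γ₂ hγ₂ h12
  have h1 := hroot γ₁ hγ₁
  have h2 := hroot γ₂ hγ₂
  have hA : Δ₂ σ γ₂ (τstar γ₁) < Δ₂ σ γ₁ (τstar γ₁) :=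
    Δ₂_anti_gamma hσ hγ₁.1.le h12 hγ₂.2.le (τstar γ₁)
  rw [h1] at hA
  by_contra hc
  push_neg at hc
  have := (Δ₂_strictAnti_tau hσ hσ' hγ₂.1.le hγ₂.2).antitone hc
  rw [h2] at this
  linarith
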